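/- The value of V_β at its local minimum satisfies V_β(a_β) = (1/2) log β + (1/2) log λ − log 2 + 1/2 + O(β²) as β → 0. -/

import Mathlib

open Real Filter Asymptotics Topology

/-- The potential `V_β(r) = −(1/2)((λβ/4) sinh r + log cosh r)`. -/
noncomputable def Vpot (lam β r : ℝ) : ℝ :=
  -(1 / 2) * (lam * (β / 4) * Real.sinh r + Real.log (Real.cosh r))

lemma key_identity (lam : ℝ) (hlam : 0 < lam) (β t : ℝ) (hβ : 0 < β) :
    Vpot lam β t - (1 / 2 * Real.log β + 1 / 2 * Real.log lam - Real.log 2 + 1 / 2)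
      = -(1 / 2) * ((lam * β / 8) ^ 2 * Real.exp (t - (Real.log β + Real.log lam - 3 * Real.log 2))
          + (1 - (Real.exp (t - (Real.log β + Real.log lam - 3 * Real.log 2)))⁻¹)
          - (t - (Real.log β + Real.log lam - 3 * Real.log 2))
          + Real.log (1 + (lam * β / 8) ^ 2 *
              (Real.exp (t - (Real.log β + Real.log lam - 3 * Real.log 2))) ^ 2)) := by
  set ε := t - (Real.log β + Real.log lam - 3 * Real.log 2) with hεdef
  have hc : (0 : ℝ) < lam * β / 8 := by positivity
  have hlogc : Real.log (lam * β / 8) = Real.log β + Real.log lam - 3 * Real.log 2 := by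
    rw [Real.log_div (by positivity) (by norm_num), Real.log_mul hlam.ne' hβ.ne',
      show (8 : ℝ) = 2 ^ 3 by norm_num, Real.log_pow]
    push_cast; ring
  have het : Real.exp t = (lam * β / 8) * Real.exp ε := by
    rw [show t = Real.log (lam * β / 8) + ε by rw [hlogc]; simp [hεdef],
      Real.exp_add, Real.exp_log hc]
  have hE : (0 : ℝ) < Real.exp ε := Real.exp_pos _
  have h1 : ((lam * β / 8) * Real.exp ε + ((lam * β / 8) * Real.exp ε)⁻¹) / 2
      = (1 + (lam * β / 8) ^ 2 * (Real.exp ε) ^ 2) / (2 * ((lam * β / 8) * Real.exp ε)) := by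
    field_simp; ring
  rw [Vpot, Real.sinh_eq, Real.cosh_eq, Real.exp_neg, het, h1,
    Real.log_div (by positivity) (by positivity),
    Real.log_mul (by norm_num) (by positivity),
    Real.log_mul hc.ne' hE.ne', Real.log_exp, hlogc]
  field_simp
  ring

/-- The value of `V_β` at its local minimum `a_β` (with expansion
`a_β = log β + log λ − 3 log 2 + O(β²)`) satisfies
`V_β(a_β) = (1/2) log β + (1/2) log λ − log 2 + 1/2 + O(β²)` as `β → 0`. -/
theorem stmt_4 (lam : ℝ) (hlam : 0 < lam) (a : ℝ → ℝ)
    (ha : ∀ᶠ β in 𝓝[>] (0 : ℝ), IsLocalMin (Vpot lam β) (a β))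
    (hexp : (fun β => a β - (Real.log β + Real.log lam - 3 * Real.log 2))
      =O[𝓝[>] (0 : ℝ)] fun β => β ^ 2) :
    (fun β => Vpot lam β (a β) -
        (1 / 2 * Real.log β + 1 / 2 * Real.log lam - Real.log 2 + 1 / 2))
      =O[𝓝[>] (0 : ℝ)] fun β => β ^ 2 := by
  set l := 𝓝[>] (0 : ℝ) with hl
  set ε : ℝ → ℝ := fun β => a β - (Real.log β + Real.log lam - 3 * Real.log 2) with hεdef
  have hεO : ε =O[l] fun β => β ^ 2 := hexp
  have hsq : Tendsto (fun β : ℝ => β ^ 2) l (𝓝 0) := by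
    have h := (continuous_pow 2 (M := ℝ)).tendsto' 0 0 (by norm_num)
    exact h.mono_left nhdsWithin_le_nhds
  have hε0 : Tendsto ε l (𝓝 0) := hεO.trans_tendsto hsq
  have hE1 : Tendsto (fun β => Real.exp (ε β)) l (𝓝 1) := by
    have h := (Real.continuous_exp.tendsto' 0 1 (by simp)).comp hε0
    exact h
  have hEO : (fun β => Real.exp (ε β)) =O[l] (fun _ => (1 : ℝ)) := hE1.isBigO_one ℝ
  have hE2O : (fun β => (Real.exp (ε β)) ^ 2) =O[l] (fun _ => (1 : ℝ)) := by
    have h := (hE1.pow 2).isBigO_one (F := ℝ)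
    simpa using h
  -- term 1 : (lam*β/8)^2 * exp (ε β)
  have h1 : (fun β => (lam * β / 8) ^ 2 * Real.exp (ε β)) =O[l] fun β => β ^ 2 := by
    have heq : (fun β => (lam * β / 8) ^ 2 * Real.exp (ε β))
        = fun β => (lam / 8) ^ 2 * (β ^ 2 * Real.exp (ε β)) := by funext β; ring
    rw [heq]
    have h := ((isBigO_refl (fun β : ℝ => β ^ 2) l).mul hEO).const_mul_left ((lam / 8) ^ 2)
    simpa using h
  -- term 2 : 1 - (exp (ε β))⁻¹
  have h2 : (fun β => 1 - (Real.exp (ε β))⁻¹) =O[l] fun β => β ^ 2 := by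
    have hb : (fun β => 1 - (Real.exp (ε β))⁻¹) =O[l] ε := by
      apply IsBigO.of_bound 2
      have hsmall : ∀ᶠ β in l, |ε β| ≤ 1 := by
        have h1' : ∀ᶠ x in 𝓝 (0 : ℝ), |x| ≤ 1 := by
          filter_upwards [Metric.closedBall_mem_nhds (0 : ℝ) one_pos] with x hx
          simpa [Real.dist_eq] using hx
        exact hε0.eventually h1'
      filter_upwards [hsmall] with β hβ
      rw [← Real.exp_neg]
      have hle := Real.abs_exp_sub_one_le (x := -ε β) (by simpa using hβ)
      rw [Real.norm_eq_abs, Real.norm_eq_abs, abs_sub_comm]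
      simpa using hle
    exact hb.trans hεO
  -- term 4 : log (1 + (lam*β/8)^2 * (exp (ε β))^2)
  have h4 : (fun β => Real.log (1 + (lam * β / 8) ^ 2 * (Real.exp (ε β)) ^ 2))
      =O[l] fun β => β ^ 2 := by
    have hb : (fun β => Real.log (1 + (lam * β / 8) ^ 2 * (Real.exp (ε β)) ^ 2))
        =O[l] fun β => (lam * β / 8) ^ 2 * (Real.exp (ε β)) ^ 2 := by
      apply IsBigO.of_bound 1
      filter_upwards with β
      have hx : (0 : ℝ) ≤ (lam * β / 8) ^ 2 * (Real.exp (ε β)) ^ 2 := by positivity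
      have hgt : (0 : ℝ) < 1 + (lam * β / 8) ^ 2 * (Real.exp (ε β)) ^ 2 := by linarith
      rw [Real.norm_eq_abs, Real.norm_eq_abs,
        abs_of_nonneg (Real.log_nonneg (by linarith)), abs_of_nonneg hx, one_mul]
      have := Real.log_le_sub_one_of_pos hgt
      linarith
    refine hb.trans ?_
    have heq : (fun β => (lam * β / 8) ^ 2 * (Real.exp (ε β)) ^ 2)
        = fun β => (lam / 8) ^ 2 * (β ^ 2 * (Real.exp (ε β)) ^ 2) := by funext β; ring
    rw [heq]
    have h := ((isBigO_refl (fun β : ℝ => β ^ 2) l).mul hE2O).const_mul_left ((lam / 8) ^ 2)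
    simpa using h
  -- combine
  have hRHS : (fun β => -(1 / 2 : ℝ) * ((lam * β / 8) ^ 2 * Real.exp (ε β)
      + (1 - (Real.exp (ε β))⁻¹) - ε β
      + Real.log (1 + (lam * β / 8) ^ 2 * (Real.exp (ε β)) ^ 2)))
      =O[l] fun β => β ^ 2 :=
    (((h1.add h2).sub hεO).add h4).const_mul_left _
  have hkey : ∀ᶠ β in l, -(1 / 2 : ℝ) * ((lam * β / 8) ^ 2 * Real.exp (ε β)
      + (1 - (Real.exp (ε β))⁻¹) - ε β
      + Real.log (1 + (lam * β / 8) ^ 2 * (Real.exp (ε β)) ^ 2))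
      = Vpot lam β (a β)
        - (1 / 2 * Real.log β + 1 / 2 * Real.log lam - Real.log 2 + 1 / 2) := by
    filter_upwards [self_mem_nhdsWithin] with β hβ
    exact (key_identity lam hlam β (a β) hβ).symm
  exact hRHS.congr' hkey EventuallyEq.rfl
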